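/- (Mirsky-type singular value perturbation inequality.) Let X and E be real m×n matrices, and let σ_1(M) ≥ σ_2(M) ≥ … denote the singular values of a matrix M in nonincreasing order. Then Σ_i | σ_i(X + E) − σ_i(X) | ≤ Σ_i σ_i(E) = ‖E‖*. -/

import Mathlib

theorem Matrix.isHermitian_transpose_mul_self {m n : Type*} [Fintype m]
    (A : Matrix m n ℝ) : (Matrix.transpose A * A).IsHermitian := by
  simpa [Matrix.conjTranspose_eq_transpose_of_trivial] using
    Matrix.isHermitian_conjTranspose_mul_self A

/-- The singular values of a real `m × n` matrix, in nonincreasing order: the square roots of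
the eigenvalues of `MᵀM`, sorted nonincreasingly. -/
noncomputable def singularValues {m n : ℕ} (M : Matrix (Fin m) (Fin n) ℝ) : Fin n → ℝ :=
  fun i =>
    Real.sqrt ((Matrix.isHermitian_transpose_mul_self M).eigenvalues
      (Tuple.sort (Matrix.isHermitian_transpose_mul_self M).eigenvalues i.rev))

/-- The nuclear norm of a real matrix: the sum of its singular values. -/
noncomputable def nuclearNorm {m n : ℕ} (M : Matrix (Fin m) (Fin n) ℝ) : ℝ :=
  ∑ i, singularValues M i

open Matrix Polynomial
namespace Mirsky

variable {N : ℕ}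

noncomputable def sortEig {A : Matrix (Fin N) (Fin N) ℝ} (hA : A.IsHermitian) : Fin N → ℝ :=
  fun i => hA.eigenvalues (Tuple.sort hA.eigenvalues i.rev)

lemma sum_sortEig {A : Matrix (Fin N) (Fin N) ℝ} (hA : A.IsHermitian) (f : ℝ → ℝ) :
    ∑ i, f (sortEig hA i) = ∑ i, f (hA.eigenvalues i) := by
  rw [← Equiv.sum_comp (Fin.revPerm.trans (Tuple.sort hA.eigenvalues))
    (fun i => f (hA.eigenvalues i))]
  rfl

lemma antitone_sortEig {A : Matrix (Fin N) (Fin N) ℝ} (hA : A.IsHermitian) :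
    Antitone (sortEig hA) := fun _ _ hij =>
  Tuple.monotone_sort hA.eigenvalues (Fin.rev_le_rev.mpr hij)

lemma star_mul_self_eigU {A : Matrix (Fin N) (Fin N) ℝ} (hA : A.IsHermitian) :
    star (hA.eigenvectorUnitary : Matrix (Fin N) (Fin N) ℝ) * hA.eigenvectorUnitary = 1 :=
  (Unitary.mem_iff.mp hA.eigenvectorUnitary.prop).1

lemma self_mul_star_eigU {A : Matrix (Fin N) (Fin N) ℝ} (hA : A.IsHermitian) :
    (hA.eigenvectorUnitary : Matrix (Fin N) (Fin N) ℝ) *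
      star (hA.eigenvectorUnitary : Matrix (Fin N) (Fin N) ℝ) = 1 :=
  (Unitary.mem_iff.mp hA.eigenvectorUnitary.prop).2

lemma spectral' {A : Matrix (Fin N) (Fin N) ℝ} (hA : A.IsHermitian) :
    A = (hA.eigenvectorUnitary : Matrix (Fin N) (Fin N) ℝ) * diagonal hA.eigenvalues *
      star (hA.eigenvectorUnitary : Matrix (Fin N) (Fin N) ℝ) := by
  conv_lhs => rw [hA.spectral_theorem]
  norm_num

lemma dot_eigU {A : Matrix (Fin N) (Fin N) ℝ} (hA : A.IsHermitian) (a b : Fin N → ℝ) :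
    ((hA.eigenvectorUnitary : Matrix (Fin N) (Fin N) ℝ) *ᵥ a) ⬝ᵥ
      ((hA.eigenvectorUnitary : Matrix (Fin N) (Fin N) ℝ) *ᵥ b) = a ⬝ᵥ b := by
  rw [dotProduct_mulVec, ← mulVec_transpose, mulVec_mulVec,
    ← Matrix.conjTranspose_eq_transpose_of_trivial, ← star_eq_conjTranspose,
    star_mul_self_eigU hA, one_mulVec]

lemma quad_form {A : Matrix (Fin N) (Fin N) ℝ} (hA : A.IsHermitian) (c : Fin N → ℝ) :
    ((hA.eigenvectorUnitary : Matrix (Fin N) (Fin N) ℝ) *ᵥ c) ⬝ᵥ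
      (A *ᵥ ((hA.eigenvectorUnitary : Matrix (Fin N) (Fin N) ℝ) *ᵥ c)) =
    ∑ i, hA.eigenvalues i * c i ^ 2 := by
  set U : Matrix (Fin N) (Fin N) ℝ := (hA.eigenvectorUnitary : Matrix (Fin N) (Fin N) ℝ) with hU
  have hAU : A * U = U * diagonal hA.eigenvalues := by
    conv_lhs => rw [spectral' hA]
    rw [mul_assoc, mul_assoc, ← hU, star_mul_self_eigU hA, mul_one]
  rw [mulVec_mulVec, hAU, ← mulVec_mulVec, dot_eigU hA]
  simp [dotProduct, mulVec_diagonal]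
  exact Finset.sum_congr rfl fun i _ => by ring

lemma weyl_mono {A B : Matrix (Fin N) (Fin N) ℝ} (hA : A.IsHermitian) (hB : B.IsHermitian)
    (hBA : (B - A).PosSemidef) (k : Fin N) : sortEig hA k ≤ sortEig hB k := by
  classical
  set UA : Matrix (Fin N) (Fin N) ℝ := (hA.eigenvectorUnitary : Matrix (Fin N) (Fin N) ℝ) with hUA
  set UB : Matrix (Fin N) (Fin N) ℝ := (hB.eigenvectorUnitary : Matrix (Fin N) (Fin N) ℝ) with hUB
  set σA : Equiv.Perm (Fin N) := Fin.revPerm.trans (Tuple.sort hA.eigenvalues) with hσA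
  set σB : Equiv.Perm (Fin N) := Fin.revPerm.trans (Tuple.sort hB.eigenvalues) with hσB
  set R : Matrix (Fin N) (Fin N) ℝ := Matrix.of (fun i j =>
    if i < k then UB j (σB i) else if k < i then UA j (σA i) else 0) with hR
  obtain ⟨x, hx0, hxR⟩ : ∃ x, x ≠ 0 ∧ R *ᵥ x = 0 := by
    rw [exists_mulVec_eq_zero_iff]
    exact det_eq_zero_of_row_eq_zero k (fun j => by simp [hR])
  set cA : Fin N → ℝ := UAᵀ *ᵥ x with hcA
  set cB : Fin N → ℝ := UBᵀ *ᵥ x with hcB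
  have hUAT : UAᵀ = star UA := by
    rw [star_eq_conjTranspose, Matrix.conjTranspose_eq_transpose_of_trivial]
  have hUBT : UBᵀ = star UB := by
    rw [star_eq_conjTranspose, Matrix.conjTranspose_eq_transpose_of_trivial]
  have hxA : UA *ᵥ cA = x := by
    rw [hcA, mulVec_mulVec, hUAT, self_mul_star_eigU hA, one_mulVec]
  have hxB : UB *ᵥ cB = x := by
    rw [hcB, mulVec_mulVec, hUBT, self_mul_star_eigU hB, one_mulVec]
  have hcA0 : ∀ i : Fin N, k < i → cA (σA i) = 0 := by
    intro i hi
    have h2 := congrFun hxR i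
    simp only [hR, mulVec, dotProduct, Matrix.of_apply, lt_asymm hi, hi, if_true, if_false,
      Pi.zero_apply] at h2
    rw [hcA]
    simpa [mulVec, dotProduct, transpose_apply] using h2
  have hcB0 : ∀ i : Fin N, i < k → cB (σB i) = 0 := by
    intro i hi
    have h2 := congrFun hxR i
    simp only [hR, mulVec, dotProduct, Matrix.of_apply, hi, if_true, Pi.zero_apply] at h2
    rw [hcB]
    simpa [mulVec, dotProduct, transpose_apply] using h2
  have hxxA : x ⬝ᵥ x = ∑ i, cA i ^ 2 := by
    conv_lhs => rw [← hxA]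
    rw [dot_eigU hA]
    simp [dotProduct, sq]
  have hxxB : x ⬝ᵥ x = ∑ i, cB i ^ 2 := by
    conv_lhs => rw [← hxB]
    rw [dot_eigU hB]
    simp [dotProduct, sq]
  have hqA : x ⬝ᵥ (A *ᵥ x) = ∑ i, hA.eigenvalues i * cA i ^ 2 := by
    conv_lhs => rw [← hxA]
    exact quad_form hA cA
  have hqB : x ⬝ᵥ (B *ᵥ x) = ∑ i, hB.eigenvalues i * cB i ^ 2 := by
    conv_lhs => rw [← hxB]
    exact quad_form hB cB
  have hlbA : sortEig hA k * (x ⬝ᵥ x) ≤ x ⬝ᵥ (A *ᵥ x) := by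
    rw [hqA, ← Equiv.sum_comp σA (fun i => hA.eigenvalues i * cA i ^ 2), hxxA,
      ← Equiv.sum_comp σA (fun i => cA i ^ 2), Finset.mul_sum]
    refine Finset.sum_le_sum (fun j _ => ?_)
    by_cases hj : j ≤ k
    · exact mul_le_mul_of_nonneg_right (antitone_sortEig hA hj) (sq_nonneg _)
    · rw [hcA0 j (not_le.mp hj)]
      simp
  have hubB : x ⬝ᵥ (B *ᵥ x) ≤ sortEig hB k * (x ⬝ᵥ x) := by
    rw [hqB, ← Equiv.sum_comp σB (fun i => hB.eigenvalues i * cB i ^ 2), hxxB,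
      ← Equiv.sum_comp σB (fun i => cB i ^ 2), Finset.mul_sum]
    refine Finset.sum_le_sum (fun j _ => ?_)
    by_cases hj : k ≤ j
    · exact mul_le_mul_of_nonneg_right (antitone_sortEig hB hj) (sq_nonneg _)
    · rw [hcB0 j (not_le.mp hj)]
      simp
  have hmid : x ⬝ᵥ (A *ᵥ x) ≤ x ⬝ᵥ (B *ᵥ x) := by
    have h3 := hBA.dotProduct_mulVec_nonneg x
    simp only [star_trivial] at h3
    rw [sub_mulVec, dotProduct_sub] at h3
    linarith
  have hxx : 0 < x ⬝ᵥ x := by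
    rcases lt_or_eq_of_le (Finset.sum_nonneg (fun i _ => mul_self_nonneg (x i))) with h | h
    · exact h
    · exact absurd (dotProduct_self_eq_zero.mp h.symm) hx0
  exact le_of_mul_le_mul_right (by linarith) hxx


variable {N : ℕ}

-- placeholders from previous chunks
-- NEW MATERIAL
lemma trace_eq_sum_eig {A : Matrix (Fin N) (Fin N) ℝ} (hA : A.IsHermitian) :
    A.trace = ∑ i, hA.eigenvalues i := by
  conv_lhs => rw [spectral' hA]
  rw [Matrix.trace_mul_cycle, star_mul_self_eigU hA, one_mul, trace_diagonal]

noncomputable def conjDiag {A : Matrix (Fin N) (Fin N) ℝ} (hA : A.IsHermitian) (d : Fin N → ℝ) :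
    Matrix (Fin N) (Fin N) ℝ :=
  (hA.eigenvectorUnitary : Matrix (Fin N) (Fin N) ℝ) * diagonal d *
    star (hA.eigenvectorUnitary : Matrix (Fin N) (Fin N) ℝ)

lemma conjDiag_posSemidef {A : Matrix (Fin N) (Fin N) ℝ} (hA : A.IsHermitian) {d : Fin N → ℝ}
    (hd : ∀ i, 0 ≤ d i) : (conjDiag hA d).PosSemidef := by
  have h1 : (diagonal d).PosSemidef := posSemidef_diagonal_iff.2 hd
  have h2 := h1.mul_mul_conjTranspose_same (hA.eigenvectorUnitary : Matrix (Fin N) (Fin N) ℝ)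
  rwa [← star_eq_conjTranspose] at h2

lemma conjDiag_trace {A : Matrix (Fin N) (Fin N) ℝ} (hA : A.IsHermitian) (d : Fin N → ℝ) :
    (conjDiag hA d).trace = ∑ i, d i := by
  rw [conjDiag, Matrix.trace_mul_cycle, star_mul_self_eigU hA, one_mul, trace_diagonal]

lemma conjDiag_sub_self {A : Matrix (Fin N) (Fin N) ℝ} (hA : A.IsHermitian) (d : Fin N → ℝ) :
    conjDiag hA d - A = conjDiag hA (d - hA.eigenvalues) := by
  have h : conjDiag hA (d - hA.eigenvalues) = conjDiag hA d - A := by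
    rw [conjDiag, conjDiag, show (d - hA.eigenvalues) = (fun i => d i - hA.eigenvalues i) from rfl, ← diagonal_sub, mul_sub, sub_mul, ← spectral' hA]
  exact h.symm

lemma sum_sortEig_id {A : Matrix (Fin N) (Fin N) ℝ} (hA : A.IsHermitian) :
    ∑ i, sortEig hA i = ∑ i, hA.eigenvalues i := by
  rw [← Equiv.sum_comp (Fin.revPerm.trans (Tuple.sort hA.eigenvalues)) hA.eigenvalues]
  rfl

lemma key_ineq {A B D : Matrix (Fin N) (Fin N) ℝ} (hA : A.IsHermitian) (hB : B.IsHermitian)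
    (hD : D.PosSemidef) (hD2 : (D - (A - B)).PosSemidef) (S : Finset (Fin N)) :
    ∑ i ∈ S, (sortEig hA i - sortEig hB i) ≤ D.trace := by
  have hB' : (B + D).IsHermitian := hB.add hD.isHermitian
  have h1 : ∀ i, sortEig hA i ≤ sortEig hB' i := by
    refine weyl_mono hA hB' ?_
    have : B + D - A = D - (A - B) := by abel
    rw [this]; exact hD2
  have h2 : ∀ i, sortEig hB i ≤ sortEig hB' i := by
    refine weyl_mono hB hB' ?_
    have : B + D - B = D := by abel
    rw [this]; exact hD
  calc ∑ i ∈ S, (sortEig hA i - sortEig hB i)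
      ≤ ∑ i ∈ S, (sortEig hB' i - sortEig hB i) :=
        Finset.sum_le_sum (fun i _ => sub_le_sub_right (h1 i) _)
    _ ≤ ∑ i, (sortEig hB' i - sortEig hB i) :=
        Finset.sum_le_sum_of_subset_of_nonneg (Finset.subset_univ S)
          (fun i _ _ => sub_nonneg.2 (h2 i))
    _ = (∑ i, sortEig hB' i) - ∑ i, sortEig hB i := Finset.sum_sub_distrib _ _
    _ = (B + D).trace - B.trace := by
        rw [sum_sortEig_id hB', sum_sortEig_id hB, trace_eq_sum_eig hB', trace_eq_sum_eig hB]
    _ = D.trace := by rw [trace_add]; ring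

lemma mirsky_hermitian {A B : Matrix (Fin N) (Fin N) ℝ} (hA : A.IsHermitian) (hB : B.IsHermitian)
    (hC : (A - B).IsHermitian) :
    ∑ i, |sortEig hA i - sortEig hB i| ≤ ∑ i, |hC.eigenvalues i| := by
  classical
  set e := hC.eigenvalues with he
  set P := conjDiag hC (fun i => max (e i) 0) with hP
  have hPpsd : P.PosSemidef := conjDiag_posSemidef hC (fun i => le_max_right _ _)
  have hPC : (P - (A - B)).PosSemidef := by
    rw [hP, conjDiag_sub_self hC]
    exact conjDiag_posSemidef hC (fun i => by simp [he, sub_nonneg, le_max_left])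
  set S : Finset (Fin N) := Finset.univ.filter (fun i => sortEig hB i ≤ sortEig hA i) with hS
  have k1 : ∑ i ∈ S, (sortEig hA i - sortEig hB i) ≤ ∑ i, max (e i) 0 := by
    have := key_ineq hA hB hPpsd hPC S
    rwa [hP, conjDiag_trace] at this
  have k2 : ∑ i ∈ Sᶜ, (sortEig hB i - sortEig hA i) ≤ ∑ i, (max (e i) 0 - e i) := by
    have hQ2 : (P - (A - B) - (B - A)).PosSemidef := by
      have : P - (A - B) - (B - A) = P := by abel
      rw [this]; exact hPpsd
    have h4 := key_ineq hB hA hPC hQ2 Sᶜ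
    rw [hP, conjDiag_sub_self hC, conjDiag_trace] at h4
    calc ∑ i ∈ Sᶜ, (sortEig hB i - sortEig hA i) ≤ _ := h4
      _ = ∑ i, (max (e i) 0 - e i) := by
          refine Finset.sum_congr rfl fun i _ => ?_
          simp [Pi.sub_apply, he]
  have split : ∑ i, |sortEig hA i - sortEig hB i| =
      (∑ i ∈ S, (sortEig hA i - sortEig hB i)) + ∑ i ∈ Sᶜ, (sortEig hB i - sortEig hA i) := by
    rw [← Finset.sum_add_sum_compl S (fun i => |sortEig hA i - sortEig hB i|)]
    congr 1
    · refine Finset.sum_congr rfl fun i hi => ?_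
      rw [hS, Finset.mem_filter] at hi
      exact abs_of_nonneg (sub_nonneg.2 hi.2)
    · refine Finset.sum_congr rfl fun i hi => ?_
      rw [Finset.mem_compl, hS, Finset.mem_filter] at hi
      have : sortEig hA i < sortEig hB i := by
        by_contra hcon
        exact hi ⟨Finset.mem_univ i, le_of_not_gt hcon⟩
      rw [abs_of_neg (by linarith), neg_sub]
  have habs : ∀ a : ℝ, max a 0 + (max a 0 - a) = |a| := by
    intro a
    rcases le_or_gt a 0 with h | h
    · rw [max_eq_right h, abs_of_nonpos h]; ring
    · rw [max_eq_left h.le, abs_of_pos h]; ring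
  calc ∑ i, |sortEig hA i - sortEig hB i|
      ≤ (∑ i, max (e i) 0) + ∑ i, (max (e i) 0 - e i) := by rw [split]; exact add_le_add k1 k2
    _ = ∑ i, |e i| := by
        rw [← Finset.sum_add_distrib]
        exact Finset.sum_congr rfl fun i _ => habs (e i)


variable {N : ℕ}

-- NEW
lemma eval_charpoly (M : Matrix (Fin N) (Fin N) ℝ) (x : ℝ) :
    M.charpoly.eval x = (x • (1 : Matrix (Fin N) (Fin N) ℝ) - M).det := by
  rw [Matrix.charpoly, _root_.eval_det, matPolyEquiv_charmatrix]
  congr 1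
  ext i j
  simp [Matrix.scalar_apply, Matrix.smul_apply, Matrix.one_apply, smul_eq_mul, mul_ite,
    Matrix.sub_apply, Matrix.diagonal_apply]

lemma det_smul_one_sub_smul {A : Matrix (Fin N) (Fin N) ℝ} (hA : A.IsHermitian) (r s : ℝ) :
    (r • (1 : Matrix (Fin N) (Fin N) ℝ) - s • A).det = ∏ i, (r - s * hA.eigenvalues i) := by
  set U : Matrix (Fin N) (Fin N) ℝ := (hA.eigenvectorUnitary : Matrix (Fin N) (Fin N) ℝ) with hU
  have key : r • (1 : Matrix (Fin N) (Fin N) ℝ) - s • A =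
      U * diagonal (fun i => r - s * hA.eigenvalues i) * star U := by
    have hd : diagonal (fun i => r - s * hA.eigenvalues i) =
        r • (1 : Matrix (Fin N) (Fin N) ℝ) - s • diagonal hA.eigenvalues := by
      rw [← diagonal_smul, smul_eq_diagonal_mul]
      ext i j
      by_cases h : i = j <;> simp [h, diagonal, Matrix.one_apply, Matrix.sub_apply, mul_comm]
    rw [hd, mul_sub, sub_mul, mul_smul_comm, smul_mul_assoc, mul_one, self_mul_star_eigU hA,
      mul_smul_comm, smul_mul_assoc, ← spectral' hA]
  rw [key, det_mul, det_mul, det_diagonal, mul_comm, ← mul_assoc, ← det_mul,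
    star_mul_self_eigU hA, det_one, one_mul]

lemma charpoly_hermitian {A : Matrix (Fin N) (Fin N) ℝ} (hA : A.IsHermitian) :
    A.charpoly = ∏ i, (X - Polynomial.C (hA.eigenvalues i)) := by
  refine Polynomial.funext fun x => ?_
  have h1 := det_smul_one_sub_smul hA x 1
  simp only [one_smul] at h1
  rw [eval_charpoly, h1, eval_prod]
  exact Finset.prod_congr rfl fun i _ => by simp

lemma multiset_eq_of_prod_X_sub_C {s t : Multiset ℝ}
    (h : (s.map fun a => X - Polynomial.C a).prod = (t.map fun a => X - Polynomial.C a).prod) :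
    s = t := by
  rw [← Polynomial.roots_multiset_prod_X_sub_C s, ← Polynomial.roots_multiset_prod_X_sub_C t, h]

lemma tuple_eq_of_prod_eq {f g : Fin N → ℝ} (hf : Antitone f) (hg : Antitone g)
    (h : ∏ i, (X - Polynomial.C (f i)) = ∏ i, (X - Polynomial.C (g i))) : f = g := by
  have hms : (Finset.univ.val.map f) = (Finset.univ.val.map g) := by
    refine multiset_eq_of_prod_X_sub_C ?_
    rw [Multiset.map_map, Multiset.map_map]
    exact h
  -- turn into lists
  have huv : (Finset.univ.val : Multiset (Fin N)) = ↑(List.finRange N) := by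
    rfl
  have hof : ∀ p : Fin N → ℝ, (Finset.univ.val.map p) = ↑(List.ofFn p) := by
    intro p
    rw [huv, List.ofFn_eq_map]
    rfl
  have hl : (List.ofFn f).Perm (List.ofFn g) := by
    rw [← Multiset.coe_eq_coe]
    rw [hof f, hof g] at hms
    exact_mod_cast hms
  have hsf : List.Pairwise (· ≥ ·) (List.ofFn f) := by
    rw [List.pairwise_ofFn]
    exact fun i j hij => hf hij.le
  have hsg : List.Pairwise (· ≥ ·) (List.ofFn g) := by
    rw [List.pairwise_ofFn]
    exact fun i j hij => hg hij.le
  have := List.Perm.eq_of_pairwise' hsf hsg hl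
  exact List.ofFn_injective this



-- assume prior: spectral', star_mul_self_eigU, self_mul_star_eigU, eval_charpoly, det_smul_one_sub_smul
variable {N : ℕ}

variable {m n : ℕ}

def dil (M : Matrix (Fin m) (Fin n) ℝ) : Matrix (Fin (m+n)) (Fin (m+n)) ℝ :=
  reindex finSumFinEquiv finSumFinEquiv (fromBlocks 0 M Mᵀ 0)

lemma dil_isHermitian (M : Matrix (Fin m) (Fin n) ℝ) : (dil M).IsHermitian := by
  unfold dil Matrix.IsHermitian
  rw [reindex_apply, conjTranspose_submatrix, fromBlocks_conjTranspose]
  simp [conjTranspose_eq_transpose_of_trivial]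

lemma dil_add (X E : Matrix (Fin m) (Fin n) ℝ) : dil (X + E) = dil X + dil E := by
  have h : (fromBlocks 0 (X+E) (X+E)ᵀ 0 : Matrix (Fin m ⊕ Fin n) (Fin m ⊕ Fin n) ℝ) =
      fromBlocks 0 X Xᵀ 0 + fromBlocks 0 E Eᵀ 0 := by
    rw [fromBlocks_add, transpose_add]
    norm_num
  rw [dil, dil, dil, h, reindex_apply, reindex_apply, reindex_apply, submatrix_add]
  rfl

lemma dil_sub (X E : Matrix (Fin m) (Fin n) ℝ) : dil (X + E) - dil X = dil E := by
  rw [dil_add]; abel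

lemma poly_eq_of_eval_ne_zero {p q : ℝ[X]} (h : ∀ x : ℝ, x ≠ 0 → p.eval x = q.eval x) : p = q := by
  have h0 : {x : ℝ | (p - q).IsRoot x}.Infinite := by
    refine Set.Infinite.mono ?_ (Set.Finite.infinite_compl (Set.finite_singleton (0:ℝ)))
    intro x hx
    simp only [Set.mem_compl_iff, Set.mem_singleton_iff] at hx
    simpa [Polynomial.IsRoot, sub_eq_zero] using h x hx
  have h2 := Polynomial.eq_zero_of_infinite_isRoot _ h0
  exact sub_eq_zero.mp h2

lemma charpoly_dil (M : Matrix (Fin m) (Fin n) ℝ) :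
    X ^ n * (dil M).charpoly =
    X ^ m * ∏ i : Fin n, (X ^ 2 - Polynomial.C ((isHermitian_transpose_mul_self M).eigenvalues i)) := by
  refine poly_eq_of_eval_ne_zero fun x hx => ?_
  simp only [eval_mul, eval_pow, eval_X, eval_prod, eval_sub, eval_C]
  rw [eval_charpoly]
  have h1 : x • (1 : Matrix (Fin (m+n)) (Fin (m+n)) ℝ) - dil M =
      reindex finSumFinEquiv finSumFinEquiv
        (fromBlocks (x • 1) (-M) (-Mᵀ) (x • 1)) := by
    have hone : (1 : Matrix (Fin (m+n)) (Fin (m+n)) ℝ) =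
        reindex finSumFinEquiv finSumFinEquiv 1 := by
      rw [reindex_apply, submatrix_one_equiv]
    have hblock : (x • (1 : Matrix (Fin m ⊕ Fin n) (Fin m ⊕ Fin n) ℝ) -
        fromBlocks 0 M Mᵀ 0) = fromBlocks (x • 1) (-M) (-Mᵀ) (x • 1) := by
      rw [← fromBlocks_one, fromBlocks_smul, sub_eq_add_neg, fromBlocks_neg, fromBlocks_add]
      norm_num
    rw [dil, reindex_apply, reindex_apply, ← hblock, submatrix_sub]
    congr 1
    rw [hone, reindex_apply]
    ext i j
    simp [Matrix.submatrix_apply, Matrix.smul_apply]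
    exact Or.inl (by simp [Matrix.one_apply, EmbeddingLike.apply_eq_iff_eq])
  rw [h1, det_reindex_self]
  letI : Invertible (x • (1 : Matrix (Fin m) (Fin m) ℝ)) :=
    ⟨x⁻¹ • 1, by rw [smul_mul_smul_comm, inv_mul_cancel₀ hx, one_mul, one_smul],
      by rw [smul_mul_smul_comm, mul_inv_cancel₀ hx, one_mul, one_smul]⟩
  rw [det_fromBlocks₁₁]
  have hinv : ⅟(x • (1 : Matrix (Fin m) (Fin m) ℝ)) = x⁻¹ • 1 := rfl
  have h2 : (x • (1 : Matrix (Fin n) (Fin n) ℝ) - (-Mᵀ) * ⅟(x • (1 : Matrix (Fin m) (Fin m) ℝ)) * (-M)) =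
      x • 1 - x⁻¹ • (Mᴴ * M) := by
    rw [hinv, Matrix.neg_mul, Matrix.neg_mul, Matrix.mul_neg, neg_neg, Matrix.mul_smul,
      Matrix.mul_one, Matrix.smul_mul, conjTranspose_eq_transpose_of_trivial]
  rw [h2, conjTranspose_eq_transpose_of_trivial, det_smul_one_sub_smul (isHermitian_transpose_mul_self M) x x⁻¹,
    det_smul, det_one, mul_one, Fintype.card_fin]
  have h3 : x ^ n = ∏ _i : Fin n, x := by
    rw [Finset.prod_const, Finset.card_univ, Fintype.card_fin]
  rw [h3, ← mul_assoc, mul_comm (∏ _i : Fin n, x) (x ^ m), mul_assoc, ← Finset.prod_mul_distrib]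
  congr 1
  refine Finset.prod_congr rfl fun i _ => ?_
  rw [mul_sub, ← mul_assoc, mul_inv_cancel₀ hx, one_mul, sq]


variable {m n : ℕ}

lemma sv_eq_sqrt (M : Matrix (Fin m) (Fin n) ℝ) (i : Fin n) :
    singularValues M i = Real.sqrt (sortEig (isHermitian_transpose_mul_self M) i) := rfl

lemma sortEig_K_nonneg (M : Matrix (Fin m) (Fin n) ℝ) (i : Fin n) :
    0 ≤ sortEig (isHermitian_transpose_mul_self M) i :=
  (posSemidef_conjTranspose_mul_self M).eigenvalues_nonneg _

lemma sv_nonneg (M : Matrix (Fin m) (Fin n) ℝ) (i : Fin n) : 0 ≤ singularValues M i :=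
  Real.sqrt_nonneg _

lemma sv_antitone (M : Matrix (Fin m) (Fin n) ℝ) : Antitone (singularValues M) :=
  fun _ _ hij => Real.sqrt_le_sqrt (antitone_sortEig _ hij)

lemma sv_sq (M : Matrix (Fin m) (Fin n) ℝ) (i : Fin n) :
    singularValues M i ^ 2 = sortEig (isHermitian_transpose_mul_self M) i :=
  Real.sq_sqrt (sortEig_K_nonneg M i)

lemma sv_eq_zero (M : Matrix (Fin m) (Fin n) ℝ) (j : Fin n) (hj : m ≤ (j:ℕ)) :
    singularValues M j = 0 := by
  rw [sv_eq_sqrt]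
  suffices h : sortEig (isHermitian_transpose_mul_self M) j = 0 by rw [h, Real.sqrt_zero]
  by_contra hne
  have hpos : 0 < sortEig (isHermitian_transpose_mul_self M) j :=
    lt_of_le_of_ne (sortEig_K_nonneg M j) (Ne.symm hne)
  have hcard : Fintype.card {i : Fin n // (isHermitian_transpose_mul_self M).eigenvalues i ≠ 0} ≤ m := by
    rw [← Matrix.IsHermitian.rank_eq_card_non_zero_eigs]
    refine le_trans (le_trans (Matrix.rank_mul_le _ _) inf_le_left) ?_
    have h1 := Matrix.rank_le_card_width (Mᴴ)
    simpa using h1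
  have hK := isHermitian_transpose_mul_self M
  have hcount : (j:ℕ) + 1 ≤ Fintype.card
      {i : Fin n // (isHermitian_transpose_mul_self M).eigenvalues i ≠ 0} := by
    have hklt : ∀ k : Fin ((j:ℕ)+1), (k:ℕ) < n :=
      fun k => lt_of_le_of_lt (Nat.lt_succ_iff.mp k.isLt) j.isLt
    set ψ : Fin ((j:ℕ)+1) → Fin n := fun k => ⟨(k:ℕ), hklt k⟩ with hψ
    have hne' : ∀ k, (isHermitian_transpose_mul_self M).eigenvalues
        (Tuple.sort (isHermitian_transpose_mul_self M).eigenvalues (ψ k).rev) ≠ 0 := by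
      intro k
      have hle : ψ k ≤ j := Fin.le_def.mpr (Nat.lt_succ_iff.mp k.isLt)
      have h2 : sortEig (isHermitian_transpose_mul_self M) j ≤
          sortEig (isHermitian_transpose_mul_self M) (ψ k) := antitone_sortEig _ hle
      exact ne_of_gt (lt_of_lt_of_le hpos h2)
    set φ : Fin ((j:ℕ)+1) → {i : Fin n // (isHermitian_transpose_mul_self M).eigenvalues i ≠ 0} :=
      fun k => ⟨Tuple.sort (isHermitian_transpose_mul_self M).eigenvalues (ψ k).rev, hne' k⟩ with hφ
    have hinj : Function.Injective φ := by
      intro k1 k2 hkk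
      have h1 : Tuple.sort (isHermitian_transpose_mul_self M).eigenvalues (ψ k1).rev =
          Tuple.sort (isHermitian_transpose_mul_self M).eigenvalues (ψ k2).rev :=
        congrArg Subtype.val hkk
      have h2 : (ψ k1).rev = (ψ k2).rev :=
        (Tuple.sort (isHermitian_transpose_mul_self M).eigenvalues).injective h1
      have h3 : ψ k1 = ψ k2 := Fin.rev_inj.mp h2
      have h4 := congrArg Fin.val h3
      exact Fin.ext h4
    simpa using Fintype.card_le_of_injective φ hinj
  omega

noncomputable def hfun (p : Fin n → ℝ) : Fin (m+n) → ℝ :=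
  fun k => if hk : (k:ℕ) < n then p ⟨(k:ℕ), hk⟩ else 0

noncomputable def gfun (p : Fin n → ℝ) : Fin (m+n) → ℝ :=
  fun k => hfun p k - hfun p k.rev

lemma hfun_pos {p : Fin n → ℝ} {k : Fin (m+n)} (h : (k:ℕ) < n) : hfun p k = p ⟨(k:ℕ), h⟩ :=
  dif_pos h

lemma hfun_ge {p : Fin n → ℝ} {k : Fin (m+n)} (h : n ≤ (k:ℕ)) : hfun p k = 0 :=
  dif_neg (not_lt.2 h)

lemma hfun_sv_ge_m (M : Matrix (Fin m) (Fin n) ℝ) {k : Fin (m+n)} (hk : m ≤ (k:ℕ)) :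
    hfun (singularValues M) k = 0 := by
  by_cases h : (k:ℕ) < n
  · rw [hfun_pos h]
    exact sv_eq_zero M _ hk
  · exact hfun_ge (not_lt.1 h)

lemma hfun_antitone {p : Fin n → ℝ} (hp : Antitone p) (h0 : ∀ i, 0 ≤ p i) :
    Antitone (hfun (m := m) p) := by
  intro k l hkl
  have hv : (k:ℕ) ≤ (l:ℕ) := hkl
  by_cases hl : (l:ℕ) < n
  · have hk : (k:ℕ) < n := lt_of_le_of_lt hv hl
    rw [hfun_pos hl, hfun_pos hk]
    exact hp (Fin.le_def.mpr hv)
  · rw [hfun_ge (not_lt.1 hl)]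
    by_cases hk : (k:ℕ) < n
    · rw [hfun_pos hk]; exact h0 _
    · rw [hfun_ge (not_lt.1 hk)]

lemma gfun_antitone {p : Fin n → ℝ} (hp : Antitone p) (h0 : ∀ i, 0 ≤ p i) :
    Antitone (gfun (m := m) p) := by
  intro k l hkl
  have h1 := hfun_antitone (m := m) hp h0 hkl
  have h2 := hfun_antitone (m := m) hp h0 (Fin.rev_le_rev.mpr hkl)
  simp only [gfun]
  linarith


lemma sortEig_dil (M : Matrix (Fin m) (Fin n) ℝ) :
    sortEig (dil_isHermitian M) = gfun (singularValues M) := by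
  refine tuple_eq_of_prod_eq (antitone_sortEig _)
    (gfun_antitone (sv_antitone M) (sv_nonneg M)) ?_
  apply mul_left_cancel₀ (pow_ne_zero n (Polynomial.X_ne_zero (R := ℝ)))
  have e1 : ∏ k, (X - Polynomial.C (sortEig (dil_isHermitian M) k)) = (dil M).charpoly := by
    rw [charpoly_hermitian (dil_isHermitian M)]
    exact Equiv.prod_comp (Fin.revPerm.trans (Tuple.sort (dil_isHermitian M).eigenvalues))
      (fun i => X - Polynomial.C ((dil_isHermitian M).eigenvalues i))
  rw [e1, charpoly_dil]
  have e2 : ∏ i : Fin n, ((X:ℝ[X]) ^ 2 -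
        Polynomial.C ((isHermitian_transpose_mul_self M).eigenvalues i)) =
      (∏ i : Fin n, (X - Polynomial.C (singularValues M i))) *
        ∏ i : Fin n, (X + Polynomial.C (singularValues M i)) := by
    rw [← Finset.prod_mul_distrib,
      ← Equiv.prod_comp (Fin.revPerm.trans (Tuple.sort
        (isHermitian_transpose_mul_self M).eigenvalues))
        (fun i => (X:ℝ[X]) ^ 2 - Polynomial.C ((isHermitian_transpose_mul_self M).eigenvalues i))]
    refine Finset.prod_congr rfl fun i _ => ?_
    have h1 : (isHermitian_transpose_mul_self M).eigenvalues
        ((Fin.revPerm.trans (Tuple.sort (isHermitian_transpose_mul_self M).eigenvalues)) i) =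
        singularValues M i ^ 2 := (sv_sq M i).symm
    rw [h1, map_pow]
    ring
  have e3 : ∏ k : Fin (m+n), (X - Polynomial.C (gfun (singularValues M) k)) =
      (∏ i : Fin m, (X - Polynomial.C (hfun (singularValues M) (Fin.castAdd n i)))) *
        ∏ j : Fin n, (X + Polynomial.C (singularValues M j)) := by
    rw [← Equiv.prod_comp finSumFinEquiv (fun k => X - Polynomial.C (gfun (singularValues M) k)),
      Fintype.prod_sum_type]
    congr 1
    · refine Finset.prod_congr rfl fun i _ => ?_
      rw [finSumFinEquiv_apply_left]
      have hrev : n ≤ ((Fin.castAdd n i).rev : ℕ) := by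
        rw [Fin.val_rev]
        have := i.isLt
        simp only [Fin.coe_castAdd]
        omega
      rw [gfun, hfun_ge hrev, sub_zero]
    · have step : ∀ j : Fin n, gfun (singularValues M) (Fin.natAdd m j) =
          - singularValues M j.rev := by
        intro j
        have h1 : m ≤ ((Fin.natAdd m j : Fin (m+n)) : ℕ) := by simp
        have h2 : ((Fin.natAdd m j : Fin (m+n)).rev : ℕ) < n := by
          rw [Fin.val_rev]
          have := j.isLt
          simp only [Fin.coe_natAdd]
          omega
        rw [gfun, hfun_sv_ge_m M h1, hfun_pos h2, zero_sub]
        have h3 : (⟨((Fin.natAdd m j : Fin (m+n)).rev : ℕ), h2⟩ : Fin n) = j.rev := by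
          apply Fin.ext
          simp only [Fin.val_rev, Fin.coe_natAdd]
          omega
        rw [h3]
      calc ∏ j : Fin n, (X - Polynomial.C (gfun (singularValues M) (Fin.natAdd m j)))
          = ∏ j : Fin n, (X + Polynomial.C (singularValues M j.rev)) := by
            refine Finset.prod_congr rfl fun j _ => ?_
            rw [step j, map_neg, sub_neg_eq_add]
        _ = ∏ j : Fin n, (X + Polynomial.C (singularValues M j)) :=
            Equiv.prod_comp Fin.revPerm (fun j => X + Polynomial.C (singularValues M j))
  have e4 : (X:ℝ[X]) ^ n * ∏ i : Fin m, (X - Polynomial.C (hfun (singularValues M) (Fin.castAdd n i))) =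
      X ^ m * ∏ j : Fin n, (X - Polynomial.C (singularValues M j)) := by
    have q1 : (∏ k : Fin (m+n), (X - Polynomial.C (hfun (singularValues M) k))) =
        (∏ i : Fin m, (X - Polynomial.C (hfun (singularValues M) (Fin.castAdd n i)))) * X ^ n := by
      rw [Fin.prod_univ_add]
      congr 1
      have hz : ∀ j : Fin n, (X - Polynomial.C (hfun (singularValues M) (Fin.natAdd m j))) = X := by
        intro j
        rw [hfun_sv_ge_m M (by simp), map_zero, sub_zero]
      rw [Finset.prod_congr rfl (fun j _ => hz j), Finset.prod_const, Finset.card_univ,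
        Fintype.card_fin]
    have q2 : (∏ k : Fin (m+n), (X - Polynomial.C (hfun (singularValues M) k))) =
        (∏ j : Fin n, (X - Polynomial.C (singularValues M j))) * X ^ m := by
      rw [← Equiv.prod_comp (finCongr (add_comm n m))
        (fun k => X - Polynomial.C (hfun (singularValues M) k)), Fin.prod_univ_add]
      congr 1
      · refine Finset.prod_congr rfl fun j _ => ?_
        have hv : ((finCongr (add_comm n m) (Fin.castAdd m j) : Fin (m+n)) : ℕ) < n := by
          simp
        rw [hfun_pos hv]
        have h3 : (⟨((finCongr (add_comm n m) (Fin.castAdd m j) : Fin (m+n)) : ℕ), hv⟩ : Fin n) = j := by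
          apply Fin.ext
          simp
        rw [h3]
      · have hz : ∀ i : Fin m,
            (X - Polynomial.C (hfun (singularValues M) (finCongr (add_comm n m) (Fin.natAdd n i)))) = X := by
          intro i
          rw [hfun_ge (by simp), map_zero, sub_zero]
        rw [Finset.prod_congr rfl (fun i _ => hz i), Finset.prod_const, Finset.card_univ,
          Fintype.card_fin]
    rw [mul_comm ((X:ℝ[X]) ^ n) _, mul_comm ((X:ℝ[X]) ^ m) _, ← q1, q2]
  rw [e2, e3, ← mul_assoc, ← mul_assoc, ← e4]

lemma sum_abs_gfun (p q : Fin n → ℝ) (hp : ∀ j : Fin n, m ≤ (j:ℕ) → p j = 0)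
    (hq : ∀ j : Fin n, m ≤ (j:ℕ) → q j = 0) :
    ∑ k : Fin (m+n), |gfun p k - gfun q k| = 2 * ∑ j, |p j - q j| := by
  set d : Fin (m+n) → ℝ := fun k => hfun p k - hfun q k with hd
  have hd0 : ∀ k : Fin (m+n), d k = 0 ∨ d k.rev = 0 := by
    intro k
    by_cases hk : (k:ℕ) < n ∧ (k:ℕ) < m
    · right
      have hrev : n ≤ (k.rev:ℕ) := by rw [Fin.val_rev]; omega
      simp [hd, hfun_ge hrev]
    · left
      by_cases h1 : (k:ℕ) < n
      · have h2 : m ≤ (k:ℕ) := by omega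
        have h3 : d k = p ⟨(k:ℕ), h1⟩ - q ⟨(k:ℕ), h1⟩ := by simp [hd, hfun_pos h1]
        rw [h3, hp ⟨(k:ℕ), h1⟩ h2, hq ⟨(k:ℕ), h1⟩ h2, sub_zero]
      · simp [hd, hfun_ge (not_lt.1 h1)]
  have step1 : ∀ k, |gfun p k - gfun q k| = |d k| + |d k.rev| := by
    intro k
    have h1 : gfun p k - gfun q k = d k - d k.rev := by
      simp only [gfun, hd]
      ring
    rw [h1]
    rcases hd0 k with h | h <;> rw [h] <;> simp
  rw [Finset.sum_congr rfl (fun k _ => step1 k), Finset.sum_add_distrib]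
  have hrev : ∑ k : Fin (m+n), |d k.rev| = ∑ k, |d k| :=
    Equiv.sum_comp Fin.revPerm (fun k => |d k|)
  rw [hrev, ← two_mul]
  congr 1
  rw [← Equiv.sum_comp (finCongr (add_comm n m)) (fun k => |d k|), Fin.sum_univ_add]
  have hz : ∀ i : Fin m, |d (finCongr (add_comm n m) (Fin.natAdd n i))| = 0 := by
    intro i
    have hge : n ≤ ((finCongr (add_comm n m) (Fin.natAdd n i) : Fin (m+n)) : ℕ) := by simp
    have h5 : d (finCongr (add_comm n m) (Fin.natAdd n i)) = 0 := by
      show hfun p _ - hfun q _ = 0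
      rw [hfun_ge hge, hfun_ge hge, sub_zero]
    rw [h5, abs_zero]
  rw [Finset.sum_congr rfl (fun i _ => hz i), Finset.sum_const, smul_zero, add_zero]
  refine Finset.sum_congr rfl fun j _ => ?_
  have hv : ((finCongr (add_comm n m) (Fin.castAdd m j) : Fin (m+n)) : ℕ) < n := by simp
  have hj : (⟨((finCongr (add_comm n m) (Fin.castAdd m j) : Fin (m+n)) : ℕ), hv⟩ : Fin n) = j := by
    apply Fin.ext; simp
  have hdj : d (finCongr (add_comm n m) (Fin.castAdd m j)) = p j - q j := by
    simp only [hd, hfun_pos hv, hj]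
  rw [hdj]

lemma eig_congr {NN : ℕ} {A B : Matrix (Fin NN) (Fin NN) ℝ} (hAB : A = B) (hA : A.IsHermitian)
    (hB : B.IsHermitian) : hA.eigenvalues = hB.eigenvalues := by
  subst hAB; rfl

theorem mirsky_final (X E : Matrix (Fin m) (Fin n) ℝ) :
    ∑ i, |singularValues (X + E) i - singularValues X i| ≤ nuclearNorm E := by
  have hE' : (dil (X + E) - dil X).IsHermitian := by rw [dil_sub]; exact dil_isHermitian E
  have main := mirsky_hermitian (dil_isHermitian (X + E)) (dil_isHermitian X) hE'
  rw [eig_congr (dil_sub X E) hE' (dil_isHermitian E), sortEig_dil, sortEig_dil] at main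
  have hs := sum_sortEig (dil_isHermitian E) (fun t => |t|)
  rw [← hs] at main
  simp only [sortEig_dil] at main
  have hL := sum_abs_gfun (singularValues (X + E)) (singularValues X)
      (fun j hj => sv_eq_zero _ j hj) (fun j hj => sv_eq_zero _ j hj)
  have hzero : ∀ j : Fin n, m ≤ (j:ℕ) → (0 : Fin n → ℝ) j = 0 := fun _ _ => rfl
  have hR := sum_abs_gfun (singularValues E) 0 (fun j hj => sv_eq_zero _ j hj) hzero
  have hg0 : ∀ k : Fin (m+n), gfun (0 : Fin n → ℝ) k = 0 := by
    intro k
    simp [gfun, hfun]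
  have hR' : ∑ k : Fin (m+n), |gfun (singularValues E) k| = 2 * ∑ j, singularValues E j := by
    calc ∑ k : Fin (m+n), |gfun (singularValues E) k|
        = ∑ k : Fin (m+n), |gfun (singularValues E) k - gfun (0 : Fin n → ℝ) k| := by
          refine Finset.sum_congr rfl fun k _ => ?_
          rw [hg0 k, sub_zero]
      _ = 2 * ∑ j, |singularValues E j - (0 : Fin n → ℝ) j| := hR
      _ = 2 * ∑ j, singularValues E j := by
          congr 1
          refine Finset.sum_congr rfl fun j _ => ?_
          rw [Pi.zero_apply, sub_zero, abs_of_nonneg (sv_nonneg E j)]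
  rw [hL, hR'] at main
  have hfin : ∑ i, |singularValues (X + E) i - singularValues X i| ≤ ∑ j, singularValues E j := by
    linarith
  exact hfin

end Mirsky

/-- Mirsky-type singular value perturbation inequality:
`Σ_i |σ_i(X+E) − σ_i(X)| ≤ Σ_i σ_i(E) = ‖E‖*`. -/
theorem mirsky_singular_value_perturbation (m n : ℕ) (X E : Matrix (Fin m) (Fin n) ℝ) :
    ∑ i, |singularValues (X + E) i - singularValues X i| ≤ nuclearNorm E := by
  exact Mirsky.mirsky_final X E
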